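/- Assume f satisfies hypotheses (H1)–(H3) with b = 0 and a < 0, i.e. the Yorke condition a·𝓜(φ) ≤ f(t,φ) ≤ −a·𝓜(−φ) holds for all φ ∈ C([−1,0],ℝ). Let x be a solution of x'(t) = f(t,x_t) with m = liminf_{t→∞} x(t) < 0 < M = limsup_{t→∞} x(t). Then: (i) for a ∈ (−3/2, −1], m ≥ (a + 1/2)M and M ≤ (a + 1/2)m; (ii) for all a < 0 (with the roles as stated), m ≥ −(1/2)a²M and M ≤ a·m. -/

import Mathlib

open Set Filter MeasureTheory Topology

/-- The Yorke functional 𝓜(φ) = max{0, max_{s ∈ [-1,0]} φ(s)}. -/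
noncomputable def yorkeM (φ : ℝ → ℝ) : ℝ := max 0 (sSup (φ '' Icc (-1 : ℝ) 0))

/-- Membership in the phase space C = C([-1,0], ℝ): we work with functions
ℝ → ℝ whose restriction to [-1,0] is continuous (only values on [-1,0] matter). -/
def InC (φ : ℝ → ℝ) : Prop := ContinuousOn φ (Icc (-1 : ℝ) 0)

/-- The segment x_t(s) = x(t+s), s ∈ [-1,0]. -/
def seg (x : ℝ → ℝ) (t : ℝ) : ℝ → ℝ := fun s => x (t + s)

/-- Carathéodory condition: measurable in t for fixed φ, continuous in φ
(w.r.t. uniform distance on [-1,0]) for fixed t, locally dominated by an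
integrable function. -/
def Caratheodory (f : ℝ → (ℝ → ℝ) → ℝ) : Prop :=
  (∀ φ, InC φ → Measurable fun t => f t φ) ∧
  (∀ t : ℝ, ∀ φ, InC φ → ∀ ε : ℝ, 0 < ε → ∃ δ : ℝ, 0 < δ ∧ ∀ ψ, InC ψ →
      (∀ s ∈ Icc (-1 : ℝ) 0, |ψ s - φ s| ≤ δ) → |f t ψ - f t φ| ≤ ε) ∧
  (∀ t : ℝ, ∀ φ, InC φ → ∃ δ : ℝ, 0 < δ ∧ ∃ m : ℝ → ℝ,
      IntegrableOn m (Icc (t - δ) (t + δ)) ∧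
      ∀ s ∈ Icc (t - δ) (t + δ), ∀ ψ, InC ψ →
        (∀ u ∈ Icc (-1 : ℝ) 0, |ψ u - φ u| ≤ δ) → |f s ψ| ≤ m s)

/-- (H1): f is Carathéodory and for every q there is ϑ(q) ≥ 0 dominating f(t,φ)
a.e. in t whenever φ ≥ q on [-1,0]. -/
def HypH1 (f : ℝ → (ℝ → ℝ) → ℝ) (θ : ℝ → ℝ) : Prop :=
  Caratheodory f ∧
  ∀ q : ℝ, 0 ≤ θ q ∧
    ∀ φ, InC φ → (∀ s ∈ Icc (-1 : ℝ) 0, q ≤ φ s) →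
      ∀ᵐ t : ℝ ∂volume, f t φ ≤ θ q

/-- (H2), the generalized Yorke condition with r(x) = ax/(1+bx):
r(𝓜(φ)) ≤ f(t,φ) for all φ, and f(t,φ) ≤ r(-𝓜(-φ)) for all φ with
min φ > -1/b (which is automatic when b = 0, since then b·φ(s) > -1 always). -/
def HypH2 (f : ℝ → (ℝ → ℝ) → ℝ) (a b : ℝ) : Prop :=
  (∀ t : ℝ, ∀ φ, InC φ → a * yorkeM φ / (1 + b * yorkeM φ) ≤ f t φ) ∧
  (∀ t : ℝ, ∀ φ, InC φ → (∀ s ∈ Icc (-1 : ℝ) 0, -1 < b * φ s) →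
      f t φ ≤ a * (-yorkeM fun s => -φ s) / (1 + b * (-yorkeM fun s => -φ s)))

/-- (H3): ∫₀^∞ f(s, p_s) ds diverges for every continuous p having a nonzero
limit at infinity. -/
def HypH3 (f : ℝ → (ℝ → ℝ) → ℝ) : Prop :=
  ∀ p : ℝ → ℝ, ContinuousOn p (Ici (-1 : ℝ)) → ∀ L : ℝ, L ≠ 0 →
    Tendsto p atTop (𝓝 L) →
    ¬∃ I : ℝ, Tendsto (fun T => ∫ s in (0 : ℝ)..T, f s (seg p s)) atTop (𝓝 I)

/-- A solution of x'(t) = f(t, x_t) on [α-1, ω) (with ω ∈ (α, +∞]) with initial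
time α: continuous on [α-1, ω) and satisfying the equivalent integral equation
(absolute continuity plus a.e. differential equation) on [α, ω). -/
def IsSolOn (f : ℝ → (ℝ → ℝ) → ℝ) (α : ℝ) (ω : EReal) (x : ℝ → ℝ) : Prop :=
  (α : EReal) < ω ∧
  ContinuousOn x {t : ℝ | α - 1 ≤ t ∧ (t : EReal) < ω} ∧
  ∀ t : ℝ, α ≤ t → (t : EReal) < ω →
    IntervalIntegrable (fun s => f s (seg x s)) volume α t ∧
    x t = x α + ∫ s in α..t, f s (seg x s)

/-- A solution on its maximal interval of existence [α-1, ω): it admits no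
extension to any strictly larger interval [α-1, ω'). -/
def IsMaximalSolOn (f : ℝ → (ℝ → ℝ) → ℝ) (α : ℝ) (ω : EReal) (x : ℝ → ℝ) : Prop :=
  IsSolOn f α ω x ∧
  ∀ ω' : EReal, ω < ω' → ∀ y : ℝ → ℝ, IsSolOn f α ω' y →
    ¬∀ t : ℝ, α - 1 ≤ t → (t : EReal) < ω → y t = x t

/-- A (global) solution of x'(t) = f(t, x_t) on [α-1, +∞). -/
def IsGlobalSol (f : ℝ → (ℝ → ℝ) → ℝ) (α : ℝ) (x : ℝ → ℝ) : Prop :=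
  ContinuousOn x (Ici (α - 1)) ∧
  ∀ t : ℝ, α ≤ t →
    IntervalIntegrable (fun s => f s (seg x s)) volume α t ∧
    x t = x α + ∫ s in α..t, f s (seg x s)

set_option maxHeartbeats 1000000

lemma yorkeM_nonneg (φ : ℝ → ℝ) : 0 ≤ yorkeM φ := le_max_left _ _

lemma yorkeM_le {φ : ℝ → ℝ} {c : ℝ} (hc : 0 ≤ c)
    (h : ∀ s ∈ Icc (-1:ℝ) 0, φ s ≤ c) : yorkeM φ ≤ c := by
  refine max_le hc (csSup_le ((nonempty_Icc.2 (by norm_num)).image φ) ?_)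
  rintro y ⟨s, hs, rfl⟩
  exact h s hs

lemma yorkeM_eq_zero {φ : ℝ → ℝ} (h : ∀ s ∈ Icc (-1:ℝ) 0, φ s ≤ 0) : yorkeM φ = 0 :=
  le_antisymm (yorkeM_le le_rfl h) (yorkeM_nonneg φ)

lemma InC_seg {x : ℝ → ℝ} {α s : ℝ} (hc : ContinuousOn x (Ici (α-1))) (hs : α ≤ s) :
    InC (seg x s) := by
  have hcmp : ContinuousOn (fun v : ℝ => s + v) (Icc (-1:ℝ) 0) :=
    (continuous_const.add continuous_id).continuousOn
  refine hc.comp hcmp ?_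
  intro v hv
  simp only [mem_Ici]
  have := hv.1
  linarith

lemma my_integral_nonpos {f : ℝ → ℝ} {a b : ℝ} (hab : a ≤ b)
    (h : ∀ u ∈ Icc a b, f u ≤ 0) : ∫ u in a..b, f u ≤ 0 := by
  have h2 := intervalIntegral.integral_nonneg (f := fun u => -f u) (μ := volume) hab
    (fun u hu => neg_nonneg.2 (h u hu))
  rw [intervalIntegral.integral_neg] at h2
  linarith

lemma integral_linear (c p q : ℝ) : ∫ t in p..q, c * (q - t) = c * ((q-p)^2/2) := by
  rw [intervalIntegral.integral_const_mul]
  have h1 : (∫ t in p..q, (q - t)) =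
      (∫ _t in p..q, (q:ℝ)) - ∫ t in p..q, t :=
    intervalIntegral.integral_sub intervalIntegrable_const
      intervalIntegral.intervalIntegrable_id
  rw [h1, intervalIntegral.integral_const, integral_id, smul_eq_mul]
  ring

lemma eps_limit {A B C : ℝ} (h : ∀ ε : ℝ, 0 < ε → A + C * ε ≤ B + ε) : A ≤ B := by
  by_contra hc
  push_neg at hc
  rcases le_or_gt (1 - C) 0 with h1 | h1
  · have := h 1 one_pos; nlinarith
  · have hε : 0 < (A - B) / (2 * (1 - C)) := div_pos (by linarith) (by linarith)
    have h2 := h _ hε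
    have h3 : (1 - C) * ((A - B) / (2 * (1 - C))) = (A - B) / 2 := by
      field_simp
    nlinarith

/-- Master one-sided lemma. -/
lemma master (x g : ℝ → ℝ) (α a : ℝ) (ha : a < 0)
    (hcont : ContinuousOn x (Ici (α-1)))
    (hint : ∀ t, α ≤ t → IntervalIntegrable g volume α t)
    (heq : ∀ t, α ≤ t → x t = x α + ∫ s in α..t, g s)
    (hlow : ∀ s, α ≤ s → a * yorkeM (seg x s) ≤ g s)
    (m M : ℝ) (hm0 : m < 0) (hM0 : 0 < M)
    (hub : ∀ ε, 0 < ε → ∀ᶠ t in atTop, x t < M + ε)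
    (hfl : ∀ ε, 0 < ε → ∃ᶠ t in atTop, x t < m + ε)
    (hfp : ∃ᶠ t in atTop, 0 < x t) :
    a * M ≤ m ∧ -(a^2/2) * M ≤ m ∧ (a ≤ -1 → (a + 1/2) * M ≤ m) := by
  have key : ∀ ε : ℝ, 0 < ε →
      a * (M+ε) ≤ m + ε ∧ -(a^2/2) * (M+ε) ≤ m + ε ∧
      (a ≤ -1 → (a+1/2)*(M+ε) ≤ m + ε) := by
    intro ε hε
    set M' := M + ε with hM'def
    have hM'pos : 0 < M' := by rw [hM'def]; linarith
    obtain ⟨T₁, hT₁⟩ := (eventually_atTop).1 (hub ε hε)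
    set T₀ := max T₁ (α + 2) with hT₀def
    have hT₀α : α + 2 ≤ T₀ := le_max_right _ _
    have hxub : ∀ t, T₀ ≤ t → x t < M' := fun t ht => hT₁ t ((le_max_left _ _).trans ht)
    obtain ⟨tp, hxtp, htp⟩ := (hfp.and_eventually (eventually_ge_atTop (T₀ + 2))).exists
    have hε' : (0:ℝ) < min ε (-m/2) := lt_min hε (by linarith)
    obtain ⟨s, hxs, hs_ge⟩ :=
      ((hfl _ hε').and_eventually (eventually_ge_atTop tp)).exists
    have hxs_neg : x s < 0 := by
      have h1 : min ε (-m/2) ≤ -m/2 := min_le_right _ _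
      linarith
    have hxs_ε : x s < m + ε := by
      have h1 : min ε (-m/2) ≤ ε := min_le_left _ _
      linarith
    have htps : tp ≤ s := hs_ge
    have hαtp : α ≤ tp := by linarith
    have hαs : α ≤ s := by linarith
    have hIccsub : Icc tp s ⊆ Ici (α - 1) := fun u hu => by
      simp only [mem_Ici]; have := hu.1; linarith
    have hcont' : ContinuousOn x (Icc tp s) := hcont.mono hIccsub
    set Z := Icc tp s ∩ x ⁻¹' {0} with hZdef
    have hZne : Z.Nonempty := by
      have h0 : (0:ℝ) ∈ Icc (x s) (x tp) := ⟨hxs_neg.le, hxtp.le⟩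
      obtain ⟨w, hw, hxw⟩ := intermediate_value_Icc' htps hcont' h0
      exact ⟨w, hw, by simpa using hxw⟩
    have hZclosed : IsClosed Z :=
      hcont'.preimage_isClosed_of_isClosed isClosed_Icc isClosed_singleton
    have hZbdd : BddAbove Z := bddAbove_Icc.mono inter_subset_left
    set z := sSup Z with hzdef
    have hzZ : z ∈ Z := hZclosed.csSup_mem hZne hZbdd
    have hxz : x z = 0 := by simpa using hzZ.2
    have hz_mem : z ∈ Icc tp s := hzZ.1
    have hzT : T₀ + 2 ≤ z := le_trans htp hz_mem.1
    have hzs : z ≤ s := hz_mem.2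
    have hαz : α ≤ z := by linarith
    -- x ≤ 0 on [z, s]
    have hle0 : ∀ u, z ≤ u → u ≤ s → x u ≤ 0 := by
      intro u hzu hus
      by_contra hcpos
      push_neg at hcpos
      have h0 : (0:ℝ) ∈ Icc (x s) (x u) := ⟨hxs_neg.le, hcpos.le⟩
      have hconts : ContinuousOn x (Icc u s) :=
        hcont'.mono (Icc_subset_Icc (le_trans hz_mem.1 hzu) le_rfl)
      obtain ⟨w, hw, hxw⟩ := intermediate_value_Icc' hus hconts h0
      have hwZ : w ∈ Z := ⟨⟨le_trans (le_trans hz_mem.1 hzu) hw.1, hw.2⟩, by simpa using hxw⟩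
      have hwz : w ≤ z := le_csSup hZbdd hwZ
      have hne : x u ≠ 0 := ne_of_gt hcpos
      have hzu' : z < u := lt_of_le_of_ne hzu (by rintro rfl; exact hne hxz)
      have := hw.1
      linarith
    have hyM_ub : ∀ r, T₀ + 1 ≤ r → yorkeM (seg x r) ≤ M' := by
      intro r hr
      refine yorkeM_le hM'pos.le ?_
      intro v hv
      exact (hxub (r + v) (by have := hv.1; linarith)).le
    have hg_ge : ∀ r, T₀ + 1 ≤ r → a * M' ≤ g r := by
      intro r hr
      calc a * M' ≤ a * yorkeM (seg x r) :=
            mul_le_mul_of_nonpos_left (hyM_ub r hr) ha.le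
        _ ≤ g r := hlow r (by linarith)
    -- backward estimate
    have hback : ∀ u, z - 1 ≤ u → u ≤ z → x u ≤ (-a) * M' * (z - u) := by
      intro u hu1 hu2
      have hαu : α ≤ u := by linarith
      have hsub : x z - x u = ∫ r in u..z, g r := by
        rw [heq z hαz, heq u hαu, add_sub_add_left_eq_sub]
        exact intervalIntegral.integral_interval_sub_left (hint z hαz) (hint u hαu)
      have hgi : IntervalIntegrable g volume u z :=
        (hint z hαz).mono_set (by
          rw [uIcc_of_le hu2, uIcc_of_le hαz]
          exact Icc_subset_Icc hαu le_rfl)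
      have hmono : (∫ _r in u..z, a * M') ≤ ∫ r in u..z, g r := by
        refine intervalIntegral.integral_mono_on hu2 intervalIntegrable_const hgi ?_
        intro r hr
        exact hg_ge r (by have := hr.1; linarith)
      rw [intervalIntegral.integral_const, smul_eq_mul] at hmono
      have h5 : (z - u) * (a * M') ≤ - x u := by rw [hxz] at hsub; linarith
      nlinarith
    set s' := min s (z+1) with hs'def
    have hzs' : z ≤ s' := le_min hzs (by linarith)
    have hs'z1 : s' ≤ z + 1 := min_le_right _ _
    have hs's : s' ≤ s := min_le_left _ _
    have hαs' : α ≤ s' := by linarith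
    set Hb : ℝ → ℝ := fun t => min M' ((-a) * M' * (z+1-t)) with hHbdef
    have hseg : ∀ t, z ≤ t → t ≤ s' → yorkeM (seg x t) ≤ Hb t := by
      intro t hzt hts'
      have hts1 : t ≤ z + 1 := hts'.trans hs'z1
      have hbound_nonneg : (0:ℝ) ≤ (-a) * M' * (z+1-t) := by
        have h1 : (0:ℝ) ≤ -a := by linarith
        have h2 : (0:ℝ) ≤ z + 1 - t := by linarith
        positivity
      refine yorkeM_le (le_min hM'pos.le hbound_nonneg) ?_
      intro v hv
      have hv1 : -1 ≤ v := hv.1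
      have hv2 : v ≤ 0 := hv.2
      show x (t + v) ≤ _
      rcases le_or_gt (t + v) z with hle | hgt
      · have h1 : x (t + v) ≤ (-a) * M' * (z - (t+v)) :=
          hback (t+v) (by linarith) hle
        refine le_min ?_ ?_
        · exact (hxub (t+v) (by linarith)).le
        · refine h1.trans ?_
          have h3 : (0:ℝ) ≤ (-a) * M' := by nlinarith
          nlinarith
      · have h4 : x (t+v) ≤ 0 := hle0 (t+v) hgt.le (by linarith [hts'.trans hs's])
        exact h4.trans (le_min hM'pos.le hbound_nonneg)
    have hHbcont : Continuous Hb := by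
      apply continuous_const.min
      fun_prop
    have hHb_nonneg : ∀ t, t ≤ z + 1 → 0 ≤ Hb t := by
      intro t ht
      refine le_min hM'pos.le ?_
      have h1 : (0:ℝ) ≤ -a := by linarith
      have h2 : (0:ℝ) ≤ z + 1 - t := by linarith
      positivity
    have hgi_zs : IntervalIntegrable g volume z s :=
      (hint s hαs).mono_set (by
        rw [uIcc_of_le hzs, uIcc_of_le hαs]
        exact Icc_subset_Icc hαz le_rfl)
    have hgi_zs' : IntervalIntegrable g volume z s' :=
      (hint s hαs).mono_set (by
        rw [uIcc_of_le hzs', uIcc_of_le hαs]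
        exact Icc_subset_Icc hαz hs's)
    have hgi_s's : IntervalIntegrable g volume s' s :=
      (hint s hαs).mono_set (by
        rw [uIcc_of_le hs's, uIcc_of_le hαs]
        exact Icc_subset_Icc hαs' le_rfl)
    have hxs_eq : x s = ∫ r in z..s, g r := by
      have h1 : x s - x z = ∫ r in z..s, g r := by
        rw [heq s hαs, heq z hαz, add_sub_add_left_eq_sub]
        exact intervalIntegral.integral_interval_sub_left (hint s hαs) (hint z hαz)
      rw [hxz] at h1
      linarith
    -- ∫ over [z, s'] of g is ≤ x s
    have key1 : (∫ r in z..s', g r) ≤ x s := by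
      rcases le_or_gt s (z+1) with hcase | hcase
      · have : s' = s := min_eq_left hcase
        rw [this, ← hxs_eq]
      · have hs'eq : s' = z + 1 := min_eq_right (by linarith)
        have h2 : (0:ℝ) ≤ ∫ r in s'..s, g r := by
          refine intervalIntegral.integral_nonneg hs's ?_
          intro r hr
          have hy0 : yorkeM (seg x r) = 0 := by
            refine yorkeM_eq_zero ?_
            intro v hv
            refine hle0 (r + v) ?_ ?_
            · have := hr.1; rw [hs'eq] at this; have := hv.1; linarith [hr.1, hv.1]
            · have := hr.2; have := hv.2; linarith
          have h3 := hlow r (by linarith [hr.1])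
          rw [hy0, mul_zero] at h3
          exact h3
        have h4 := intervalIntegral.integral_add_adjacent_intervals hgi_zs' hgi_s's
        rw [hxs_eq]
        linarith
    have haHbi : ∀ p q : ℝ, IntervalIntegrable (fun t => a * Hb t) volume p q :=
      fun p q => (continuous_const.mul hHbcont).intervalIntegrable p q
    have key2 : (∫ t in z..s', a * Hb t) ≤ ∫ r in z..s', g r := by
      refine intervalIntegral.integral_mono_on hzs' (haHbi z s') hgi_zs' ?_
      intro t ht
      calc a * Hb t ≤ a * yorkeM (seg x t) :=
            mul_le_mul_of_nonpos_left (hseg t ht.1 ht.2) ha.le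
        _ ≤ g t := hlow t (by linarith [ht.1])
    have key3 : (∫ t in z..(z+1), a * Hb t) ≤ ∫ t in z..s', a * Hb t := by
      have h4 := intervalIntegral.integral_add_adjacent_intervals (haHbi z s') (haHbi s' (z+1))
      have h5 : (∫ t in s'..(z+1), a * Hb t) ≤ 0 := by
        refine my_integral_nonpos hs'z1 ?_
        intro t ht
        have h6 := hHb_nonneg t ht.2
        exact mul_nonpos_iff.mpr (Or.inr ⟨ha.le, h6⟩)
      linarith
    have keymain : (∫ t in z..(z+1), a * Hb t) < m + ε := by
      calc (∫ t in z..(z+1), a * Hb t) ≤ ∫ t in z..s', a * Hb t := key3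
        _ ≤ ∫ r in z..s', g r := key2
        _ ≤ x s := key1
        _ < m + ε := hxs_ε
    have hz1 : z ≤ z + 1 := by linarith
    refine ⟨?_, ?_, ?_⟩
    · -- crude bound: a * M' ≤ ∫ a * Hb
      have hlb : a * M' ≤ ∫ t in z..(z+1), a * Hb t := by
        have h6 : (∫ _t in z..(z+1), a * M') ≤ ∫ t in z..(z+1), a * Hb t := by
          refine intervalIntegral.integral_mono_on hz1 intervalIntegrable_const (haHbi _ _) ?_
          intro t ht
          exact mul_le_mul_of_nonpos_left (min_le_left _ _) ha.le
        rw [intervalIntegral.integral_const, smul_eq_mul] at h6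
        have : (z + 1 - z) = (1:ℝ) := by ring
        rw [this, one_mul] at h6
        exact h6
      linarith
    · -- quadratic bound
      have hlb : -(a^2/2) * M' ≤ ∫ t in z..(z+1), a * Hb t := by
        have h6 : (∫ t in z..(z+1), (a * ((-a) * M')) * ((z+1) - t)) ≤
            ∫ t in z..(z+1), a * Hb t := by
          refine intervalIntegral.integral_mono_on hz1
            ((by fun_prop : Continuous fun t => (a * ((-a) * M')) * ((z+1) - t)).intervalIntegrable _ _)
            (haHbi _ _) ?_
          intro t ht
          have h7 : Hb t ≤ (-a) * M' * (z+1-t) := min_le_right _ _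
          have h8 := mul_le_mul_of_nonpos_left h7 ha.le
          calc (a * ((-a) * M')) * ((z+1) - t) = a * ((-a) * M' * (z+1-t)) := by ring
            _ ≤ a * Hb t := h8
        rw [integral_linear] at h6
        have h9 : a * (-a * M') * ((z + 1 - z) ^ 2 / 2) = -(a^2/2) * M' := by ring
        rw [h9] at h6
        exact h6
      linarith
    · -- refined bound for a ≤ -1
      intro ha1
      have hane : a ≠ 0 := ne_of_lt ha
      have hinva : a * (1/a) = 1 := by field_simp
      have hinv_neg : 1/a < 0 := by
        have := one_div_neg.mpr ha
        linarith
      have hinv_ge : -1 ≤ 1/a := by nlinarith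
      set p := z + 1 + 1/a with hpdef
      have hzp : z ≤ p := by rw [hpdef]; linarith
      have hpz1 : p ≤ z + 1 := by rw [hpdef]; linarith
      have hsplit := intervalIntegral.integral_add_adjacent_intervals
        (haHbi z p) (haHbi p (z+1))
      have hpiece1 : (∫ t in z..p, a * Hb t) = (1 + 1/a) * (a * M') := by
        have hcg : (∫ t in z..p, a * Hb t) = ∫ _t in z..p, a * M' := by
          refine intervalIntegral.integral_congr ?_
          intro t ht
          rw [uIcc_of_le hzp] at ht
          have h10 : M' ≤ (-a) * M' * (z+1-t) := by
            have h11 : z + 1 - t ≥ -(1/a) := by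
              have := ht.2; rw [hpdef] at this; linarith
            have hna : (0:ℝ) ≤ (-a) * M' := by nlinarith
            have h12 : (-a) * M' * (-(1/a)) ≤ (-a) * M' * (z+1-t) :=
              mul_le_mul_of_nonneg_left h11 hna
            have h13 : (-a) * M' * (-(1/a)) = M' := by field_simp
            rw [h13] at h12
            exact h12
          show a * Hb t = a * M'
          rw [hHbdef]
          simp only [min_eq_left h10]
        rw [hcg, intervalIntegral.integral_const, smul_eq_mul]
        rw [hpdef]
        ring
      have hpiece2 : (∫ t in p..(z+1), a * Hb t) = -(M'/2) := by
        have hcg : (∫ t in p..(z+1), a * Hb t) =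
            ∫ t in p..(z+1), (a * ((-a) * M')) * ((z+1) - t) := by
          refine intervalIntegral.integral_congr ?_
          intro t ht
          rw [uIcc_of_le hpz1] at ht
          have h10 : (-a) * M' * (z+1-t) ≤ M' := by
            have h11 : z + 1 - t ≤ -(1/a) := by
              have := ht.1; rw [hpdef] at this; linarith
            have hna : (0:ℝ) ≤ (-a) * M' := by nlinarith
            have h12 : (-a) * M' * (z+1-t) ≤ (-a) * M' * (-(1/a)) :=
              mul_le_mul_of_nonneg_left h11 hna
            have h13 : (-a) * M' * (-(1/a)) = M' := by field_simp
            rw [h13] at h12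
            exact h12
          show a * Hb t = _
          rw [hHbdef]
          simp only [min_eq_right h10]
          ring
        rw [hcg, integral_linear]
        have h12 : z + 1 - p = -(1/a) := by rw [hpdef]; ring
        rw [h12]
        field_simp
      have hlb : (a + 1/2) * M' ≤ ∫ t in z..(z+1), a * Hb t := by
        rw [← hsplit, hpiece1, hpiece2]
        have : (1 + 1/a) * (a * M') = a * M' + M' := by
          have : (1/a) * (a * M') = M' := by field_simp
          nlinarith [this]
        rw [this]
        ring_nf
        nlinarith [hinva]
      linarith
  refine ⟨?_, ?_, ?_⟩
  · refine eps_limit (C := a) ?_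
    intro ε hε
    have h := (key ε hε).1
    calc a * M + a * ε = a * (M + ε) := by ring
      _ ≤ m + ε := h
  · refine eps_limit (C := -(a^2/2)) ?_
    intro ε hε
    have h := (key ε hε).2.1
    calc -(a^2/2) * M + -(a^2/2) * ε = -(a^2/2) * (M + ε) := by ring
      _ ≤ m + ε := h
  · intro ha1
    refine eps_limit (C := a + 1/2) ?_
    intro ε hε
    have h := (key ε hε).2.2 ha1
    calc (a + 1/2) * M + (a + 1/2) * ε = (a + 1/2) * (M + ε) := by ring
      _ ≤ m + ε := h

/-- The b = 0 (Yorke) case: under (H1)-(H3) with the Yorke condition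
a𝓜(φ) ≤ f(t,φ) ≤ -a𝓜(-φ), a < 0, for a solution with
m = liminf x < 0 < M = limsup x: (i) if a ∈ (-3/2, -1] then m ≥ (a+1/2)M and
M ≤ (a+1/2)m; (ii) m ≥ -(1/2)a²M and M ≤ am. -/
theorem yorke_case_bounds
    (f : ℝ → (ℝ → ℝ) → ℝ) (θ : ℝ → ℝ) (a : ℝ) (ha : a < 0)
    (h1 : HypH1 f θ) (h2 : HypH2 f a 0) (h3 : HypH3 f)
    (α : ℝ) (x : ℝ → ℝ) (hx : IsGlobalSol f α x)
    (hxbdd₁ : IsBoundedUnder (· ≤ ·) atTop x)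
    (hxbdd₂ : IsBoundedUnder (· ≥ ·) atTop x)
    (m M : ℝ) (hm : m = liminf x atTop) (hM : M = limsup x atTop)
    (hm0 : m < 0) (hM0 : 0 < M) :
    (-(3 / 2) < a ∧ a ≤ -1 → (a + 1 / 2) * M ≤ m ∧ M ≤ (a + 1 / 2) * m) ∧
    (-(1 / 2) * a ^ 2 * M ≤ m ∧ M ≤ a * m) := by
  set g : ℝ → ℝ := fun s => f s (seg x s) with hgdef
  have hcont := hx.1
  have hint : ∀ t, α ≤ t → IntervalIntegrable g volume α t := fun t ht => (hx.2 t ht).1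
  have heqn : ∀ t, α ≤ t → x t = x α + ∫ s in α..t, g s := fun t ht => (hx.2 t ht).2
  have hlow : ∀ s, α ≤ s → a * yorkeM (seg x s) ≤ g s := by
    intro s hs
    have h := h2.1 s (seg x s) (InC_seg hcont hs)
    simpa using h
  have hhigh : ∀ s, α ≤ s → g s ≤ -(a * yorkeM fun v => -(seg x s v)) := by
    intro s hs
    have h := h2.2 s (seg x s) (InC_seg hcont hs) (by intro v hv; norm_num)
    have e : a * (-yorkeM fun v => -(seg x s v)) / (1 + 0 * (-yorkeM fun v => -(seg x s v)))
        = -(a * yorkeM fun v => -(seg x s v)) := by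
      rw [zero_mul, add_zero, div_one]
      ring
    rw [e] at h
    exact h
  have hcobdd_le : IsCoboundedUnder (· ≤ ·) atTop x := hxbdd₂.isCoboundedUnder_le
  have hcobdd_ge : IsCoboundedUnder (· ≥ ·) atTop x := hxbdd₁.isCoboundedUnder_ge
  -- master for x
  have K := master x g α a ha hcont hint heqn hlow m M hm0 hM0
    (by
      intro ε hε
      refine eventually_lt_of_limsup_lt ?_ hxbdd₁
      rw [← hM]; linarith)
    (by
      intro ε hε
      refine frequently_lt_of_liminf_lt hcobdd_ge ?_
      rw [← hm]; linarith)
    (frequently_lt_of_lt_limsup hcobdd_le (by rw [← hM]; exact hM0))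
  -- master for -x
  have L := master (fun t => -x t) (fun s => -g s) α a ha hcont.neg
    (fun t ht => (hint t ht).neg)
    (by
      intro t ht
      have h := heqn t ht
      simp only [intervalIntegral.integral_neg]
      linarith)
    (by
      intro s hs
      have h := hhigh s hs
      have e : seg (fun t => -x t) s = fun v => -(seg x s v) := rfl
      rw [e]
      show (a * yorkeM fun v => -(seg x s v)) ≤ -g s
      linarith)
    (-M) (-m) (by linarith) (by linarith)
    (by
      intro ε hε
      have h : ∀ᶠ t in atTop, m - ε < x t := by
        refine eventually_lt_of_lt_liminf ?_ hxbdd₂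
        rw [← hm]; linarith
      exact h.mono fun t ht => by simp; linarith)
    (by
      intro ε hε
      have h : ∃ᶠ t in atTop, M - ε < x t := by
        refine frequently_lt_of_lt_limsup hcobdd_le ?_
        rw [← hM]; linarith
      exact h.mono fun t ht => by simp; linarith)
    (by
      have h : ∃ᶠ t in atTop, x t < 0 := by
        refine frequently_lt_of_liminf_lt hcobdd_ge ?_
        rw [← hm]; exact hm0
      exact h.mono fun t ht => by simp; linarith)
  obtain ⟨K1, K2, K3⟩ := K
  obtain ⟨L1, L2, L3⟩ := L
  constructor
  · rintro ⟨_, ha1⟩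
    refine ⟨K3 ha1, ?_⟩
    have h := L3 ha1
    have e : (a + 1/2) * -m = -((a + 1/2) * m) := by ring
    rw [e] at h
    linarith
  · constructor
    · have e : -(1/2) * a^2 * M = -(a^2/2) * M := by ring
      rw [e]
      exact K2
    · have e : a * -m = -(a * m) := by ring
      rw [e] at L1
      linarith
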